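/- arXiv:2604.01833 — 5 statements merged into one kernel-verified Lean document; each statement's English description precedes it below -/
import Mathlib

section
/- Let E be a finite-dimensional real inner product space and A, B : E → E symmetric linear maps. Suppose A commutes with every orthogonal transformation of E that commutes with B; that is, for every linear isometry equivalence G : E ≃ E with G ∘ B = B ∘ G one has G ∘ A = A ∘ G. Then A ∘ B = B ∘ A, and there exists a function f : ℝ → ℝ such that for every λ ∈ ℝ and every v ∈ E with B v = λ • v, one has A v = f(λ) • v. -/
open scoped RealInnerProductSpace

/-- If a symmetric linear map `A` commutes with every orthogonal transformation that
commutes with a symmetric linear map `B`, then `A` commutes with `B` and acts as a scalar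
`f λ` on each eigenspace of `B` for `λ`. -/
theorem stmt_6 {E : Type*} [NormedAddCommGroup E] [InnerProductSpace ℝ E]
    [FiniteDimensional ℝ E] (A B : E →ₗ[ℝ] E)
    (hA : ∀ u v : E, ⟪A u, v⟫ = ⟪u, A v⟫)
    (hB : ∀ u v : E, ⟪B u, v⟫ = ⟪u, B v⟫)
    (hcomm : ∀ G : E ≃ₗᵢ[ℝ] E, (∀ w : E, G (B w) = B (G w)) →
      (∀ w : E, G (A w) = A (G w))) :
    (∀ w : E, A (B w) = B (A w)) ∧
    ∃ f : ℝ → ℝ, ∀ (l : ℝ) (v : E), B v = l • v → A v = f l • v := by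
  classical
  -- every eigenvector of B is an eigenvector of A
  have key : ∀ (l : ℝ) (v : E), B v = l • v → ∃ c : ℝ, A v = c • v := by
    intro l v hv
    by_cases h0 : v = 0
    · exact ⟨0, by simp [h0]⟩
    set K : Submodule ℝ E := (ℝ ∙ v)ᗮ with hKdef
    have hKperp : Kᗮ = ℝ ∙ v := Submodule.orthogonal_orthogonal _
    have hvK : v ∈ Kᗮ := hKperp ▸ Submodule.mem_span_singleton_self v
    set G : E ≃ₗᵢ[ℝ] E := K.reflection with hGdef
    have hGB : ∀ w : E, G (B w) = B (G w) := by
      intro w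
      obtain ⟨y, hy, z, hz, rfl⟩ := K.exists_add_mem_mem_orthogonal w
      have hBy : B y ∈ K := by
        rw [hKdef, Submodule.mem_orthogonal_singleton_iff_inner_right]
        have hy0 : ⟪v, y⟫ = 0 := by
          rw [← Submodule.mem_orthogonal_singleton_iff_inner_right]; exact hy
        rw [← hB, hv, inner_smul_left]
        simp [hy0]
      have hBz : B z ∈ Kᗮ := by
        rw [hKperp] at hz ⊢
        rw [Submodule.mem_span_singleton] at hz
        obtain ⟨t, rfl⟩ := hz
        rw [map_smul, hv]
        exact Submodule.smul_mem _ _ (Submodule.smul_mem _ _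
          (Submodule.mem_span_singleton_self v))
      rw [map_add, map_add, map_add, hGdef,
        Submodule.reflection_mem_subspace_eq_self hy,
        Submodule.reflection_mem_subspace_orthogonalComplement_eq_neg hz,
        Submodule.reflection_mem_subspace_eq_self hBy,
        Submodule.reflection_mem_subspace_orthogonalComplement_eq_neg hBz]
      simp
    have hGA := hcomm G hGB v
    have hGv : G v = -v := Submodule.reflection_mem_subspace_orthogonalComplement_eq_neg hvK
    rw [hGv, map_neg] at hGA
    have hAvK : A v ∈ Kᗮ := by
      have h := hGA
      rw [hGdef, Submodule.reflection_apply] at h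
      have h2 : (2 : ℕ) • (K.orthogonalProjectionOnto (A v) : E) = 0 :=
        sub_eq_neg_self.mp h
      rw [two_smul] at h2
      have h3 : (2 : ℝ) • (K.orthogonalProjectionOnto (A v) : E) = 0 := by
        rw [two_smul]; exact h2
      have hproj : (K.orthogonalProjectionOnto (A v) : E) = 0 := by
        rcases smul_eq_zero.mp h3 with h | h
        · norm_num at h
        · exact h
      exact Submodule.orthogonalProjectionOnto_eq_zero_iff.mp (Submodule.coe_eq_zero.mp hproj)
    rw [hKperp, Submodule.mem_span_singleton] at hAvK
    obtain ⟨c, hc⟩ := hAvK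
    exact ⟨c, hc.symm⟩
  -- scalar is the same across an eigenspace
  have same : ∀ (l : ℝ) (v w : E) (a b : ℝ), v ≠ 0 → w ≠ 0 → B v = l • v → B w = l • w →
      A v = a • v → A w = b • w → a = b := by
    intro l v w a b hv0 hw0 hv hw ha hb
    by_cases hmem : w ∈ ℝ ∙ v
    · rw [Submodule.mem_span_singleton] at hmem
      obtain ⟨t, rfl⟩ := hmem
      have : A (t • v) = a • (t • v) := by
        rw [map_smul, ha, smul_comm]
      have hba : b • (t • v) = a • (t • v) := by rw [← hb, this]
      have := sub_eq_zero.mpr hba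
      rw [← sub_smul] at this
      rcases smul_eq_zero.mp this with h | h
      · linarith
      · exact absurd h hw0
    · have hvw : v + w ≠ 0 := by
        intro h
        apply hmem
        rw [Submodule.mem_span_singleton]
        exact ⟨-1, by rw [neg_smul, one_smul, neg_eq_iff_add_eq_zero]; exact h⟩
      have hBvw : B (v + w) = l • (v + w) := by rw [map_add, hv, hw, smul_add]
      obtain ⟨c, hc⟩ := key l (v + w) hBvw
      have heq : (a - c) • v = (c - b) • w := by
        have : a • v + b • w = c • v + c • w := by
          rw [← ha, ← hb, ← map_add, hc, smul_add]
        rw [sub_smul, sub_smul]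
        rw [sub_eq_sub_iff_add_eq_add]
        linear_combination (norm := module) this
      have hcb : c = b := by
        by_contra hne
        apply hmem
        rw [Submodule.mem_span_singleton]
        refine ⟨(c - b)⁻¹ * (a - c), ?_⟩
        rw [mul_smul, heq, inv_smul_smul₀ (sub_ne_zero.mpr hne)]
      have : (a - c) • v = 0 := by rw [heq, hcb, sub_self, zero_smul]
      rcases smul_eq_zero.mp this with h | h
      · have : a = c := by linarith [sub_eq_zero.mp h]
        rw [this, hcb]
      · exact absurd h hv0
  have hf : ∀ l : ℝ, ∃ c : ℝ, ∀ v : E, B v = l • v → A v = c • v := by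
    intro l
    by_cases h : ∃ v : E, v ≠ 0 ∧ B v = l • v
    · obtain ⟨v, hv0, hv⟩ := h
      obtain ⟨a, ha⟩ := key l v hv
      refine ⟨a, fun w hw => ?_⟩
      by_cases hw0 : w = 0
      · simp [hw0]
      · obtain ⟨b, hb⟩ := key l w hw
        rw [hb, same l v w a b hv0 hw0 hv hw ha hb]
    · refine ⟨0, fun w hw => ?_⟩
      by_cases hw0 : w = 0
      · simp [hw0]
      · exact absurd ⟨w, hw0, hw⟩ h
  choose f hfspec using hf
  refine ⟨?_, f, fun l v hv => hfspec l v hv⟩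
  -- commutativity, via an eigenbasis of B
  have hB' : B.IsSymmetric := hB
  have hn : Module.finrank ℝ E = Module.finrank ℝ E := rfl
  have hAB : A ∘ₗ B = B ∘ₗ A := by
    apply (hB'.eigenvectorBasis hn).toBasis.ext
    intro i
    simp only [LinearMap.comp_apply, OrthonormalBasis.coe_toBasis]
    have hi := hB'.apply_eigenvectorBasis hn i
    obtain ⟨c, hc⟩ := key (hB'.eigenvalues hn i) _ hi
    rw [hi, map_smul, hc, map_smul, hi, smul_comm]
  intro w
  exact DFunLike.congr_fun hAB w
end

section
/- Let E be a finite-dimensional real inner product space and A, B : E → E symmetric linear maps such that for every linear isometry equivalence G : E ≃ E with G ∘ B = B ∘ G one has G ∘ A = A ∘ G. Then there exists an orthonormal basis (e_i) of E together with real numbers (σ_i) and (τ_i) such that B e_i = σ_i • e_i and A e_i = τ_i • e_i for every index i; moreover τ_i = τ_j whenever σ_i = σ_j. -/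
open scoped RealInnerProductSpace

section aux
variable {E : Type*} [NormedAddCommGroup E] [InnerProductSpace ℝ E] [FiniteDimensional ℝ E]

lemma aux_unit (A B : E →ₗ[ℝ] E)
    (hB : ∀ u v : E, ⟪B u, v⟫ = ⟪u, B v⟫)
    (hcomm : ∀ G : E ≃ₗᵢ[ℝ] E, (∀ w : E, G (B w) = B (G w)) →
      (∀ w : E, G (A w) = A (G w)))
    {u : E} (hu : ‖u‖ = 1) {μ : ℝ} (hμ : B u = μ • u) :
    A u = ⟪u, A u⟫ • u := by
  have hproj' : ∀ w : E, (ℝ ∙ u).starProjection w = ⟪u, w⟫ • u := by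
    intro w
    rw [Submodule.starProjection_singleton, hu]
    norm_num
  have hrefl : ∀ w : E, (ℝ ∙ u).reflection w = (2 : ℕ) • ⟪u, w⟫ • u - w := by
    intro w
    rw [Submodule.reflection_apply, hproj']
  have hBinner : ∀ w : E, ⟪u, B w⟫ = μ * ⟪u, w⟫ := by
    intro w
    rw [← hB, hμ, real_inner_smul_left]
  have hcB : ∀ w : E, (ℝ ∙ u).reflection (B w) = B ((ℝ ∙ u).reflection w) := by
    intro w
    rw [hrefl, hrefl, hBinner]
    simp [map_sub, hμ, smul_smul, mul_comm, mul_assoc, mul_left_comm]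
  have h1 := hcomm ((ℝ ∙ u).reflection) hcB u
  have h2 : (ℝ ∙ u).reflection u = u :=
    Submodule.reflection_mem_subspace_eq_self (Submodule.mem_span_singleton_self u)
  rw [h2, hrefl] at h1
  rw [sub_eq_iff_eq_add, two_nsmul] at h1
  have h3 : (2 : ℝ) • ⟪u, A u⟫ • u = (2 : ℝ) • A u := by
    rw [two_smul, two_smul]; exact h1
  exact (smul_right_injective E two_ne_zero h3).symm

lemma aux_gen (A B : E →ₗ[ℝ] E)
    (hB : ∀ u v : E, ⟪B u, v⟫ = ⟪u, B v⟫)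
    (hcomm : ∀ G : E ≃ₗᵢ[ℝ] E, (∀ w : E, G (B w) = B (G w)) →
      (∀ w : E, G (A w) = A (G w)))
    {u : E} (hu : u ≠ 0) {μ : ℝ} (hμ : B u = μ • u) :
    ∃ c : ℝ, A u = c • u := by
  have hn : ‖u‖ ≠ 0 := norm_ne_zero_iff.mpr hu
  set e : E := ‖u‖⁻¹ • u with he
  have hue : u = ‖u‖ • e := by rw [he, smul_smul, mul_inv_cancel₀ hn, one_smul]
  have hne : ‖e‖ = 1 := by rw [he, norm_smul]; simp [hn]
  have hBe : B e = μ • e := by rw [he, map_smul, hμ, smul_comm]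
  set c : ℝ := ⟪e, A e⟫ with hc
  have hAe : A e = c • e := aux_unit A B hB hcomm hne hBe
  refine ⟨c, ?_⟩
  rw [hue, map_smul, hAe, smul_comm]

end aux

/-- Under the hypotheses of the covariance-alignment theorem, there is an orthonormal
basis simultaneously diagonalizing `A` and `B`, where the eigenvalue of `A` depends only
on the eigenvalue of `B` (a well-defined transfer function). -/
theorem stmt_7 {E : Type*} [NormedAddCommGroup E] [InnerProductSpace ℝ E]
    [FiniteDimensional ℝ E] (A B : E →ₗ[ℝ] E)
    (hA : ∀ u v : E, ⟪A u, v⟫ = ⟪u, A v⟫)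
    (hB : ∀ u v : E, ⟪B u, v⟫ = ⟪u, B v⟫)
    (hcomm : ∀ G : E ≃ₗᵢ[ℝ] E, (∀ w : E, G (B w) = B (G w)) →
      (∀ w : E, G (A w) = A (G w))) :
    ∃ (b : OrthonormalBasis (Fin (Module.finrank ℝ E)) ℝ E)
      (σ τ : Fin (Module.finrank ℝ E) → ℝ),
      (∀ i, B (b i) = σ i • b i) ∧
      (∀ i, A (b i) = τ i • b i) ∧
      (∀ i j, σ i = σ j → τ i = τ j) := by
  have hB' : B.IsSymmetric := hB
  have hn : Module.finrank ℝ E = Module.finrank ℝ E := rfl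
  set b := hB'.eigenvectorBasis hn with hb
  set σ := hB'.eigenvalues hn with hσ
  have hBb : ∀ i, B (b i) = σ i • b i := fun i => hB'.apply_eigenvectorBasis hn i
  have hunit : ∀ i, ‖b i‖ = 1 := fun i => b.orthonormal.1 i
  set τ : Fin (Module.finrank ℝ E) → ℝ := fun i => ⟪b i, A (b i)⟫ with hτ
  have hAb : ∀ i, A (b i) = τ i • b i := fun i =>
    aux_unit A B hB hcomm (hunit i) (hBb i)
  refine ⟨b, σ, τ, hBb, hAb, ?_⟩
  intro i j hij
  rcases eq_or_ne i j with rfl | hne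
  · rfl
  · have hperp : ⟪b i, b j⟫ = 0 := b.orthonormal.2 hne
    have hperp' : ⟪b j, b i⟫ = 0 := by rw [real_inner_comm]; exact hperp
    have huz : b i + b j ≠ 0 := by
      intro h
      have : ⟪b i, b i + b j⟫ = 0 := by rw [h, inner_zero_right]
      rw [inner_add_right, hperp, real_inner_self_eq_norm_sq, hunit i] at this
      norm_num at this
    have hBu : B (b i + b j) = σ i • (b i + b j) := by
      rw [map_add, hBb, hBb, ← hij, smul_add]
    obtain ⟨c, hc⟩ := aux_gen A B hB hcomm huz hBu
    have hAu : τ i • b i + τ j • b j = c • b i + c • b j := by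
      rw [← hAb, ← hAb, ← map_add, hc, smul_add]
    have hi : τ i = c := by
      have := congrArg (fun w => ⟪b i, w⟫) hAu
      simpa [inner_add_right, real_inner_smul_right, hperp,
        real_inner_self_eq_norm_sq, hunit i] using this
    have hj : τ j = c := by
      have := congrArg (fun w => ⟪b j, w⟫) hAu
      simpa [inner_add_right, real_inner_smul_right, hperp',
        real_inner_self_eq_norm_sq, hunit j] using this
    rw [hi, hj]
end

section
/- Let E be a measurable space, L a measurable space (the label space), and G : E → E a measurable map. Let step : E × E × L → E be measurable and satisfy step(G w, G x, y) = G (step(w, x, y)) for all w, x ∈ E and y ∈ L. Let ν be a probability measure on E with Measure.map G ν = ν, let π be a probability measure on L, and let μ₀ be a probability measure on E with Measure.map G μ₀ = μ₀. Define recursively μ_{t+1} = Measure.map (fun p => step(p.1, p.2.1, p.2.2)) (μ_t.prod (ν.prod π)). Then for every t ∈ ℕ, Measure.map G μ_t = μ_t. -/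
open MeasureTheory

/-- Inductive invariance of the weight law under a symmetry `G` of the data
distribution, for a `G`-equivariant SGD step with input-independent random labels. -/
theorem stmt_12 {E L : Type*} [MeasurableSpace E] [MeasurableSpace L]
    (G : E → E) (hGmeas : Measurable G)
    (step : E × E × L → E) (hstepMeas : Measurable step)
    (hequiv : ∀ (w x : E) (y : L), step (G w, G x, y) = G (step (w, x, y)))
    (ν : Measure E) [IsProbabilityMeasure ν] (hν : Measure.map G ν = ν)
    (π : Measure L) [IsProbabilityMeasure π]
    (μ₀ : Measure E) [IsProbabilityMeasure μ₀] (hμ₀ : Measure.map G μ₀ = μ₀)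
    (μ : ℕ → Measure E) (hinit : μ 0 = μ₀)
    (hrec : ∀ t : ℕ, μ (t + 1) =
      Measure.map (fun p : E × E × L => step (p.1, p.2.1, p.2.2)) ((μ t).prod (ν.prod π))) :
    ∀ t : ℕ, Measure.map G (μ t) = μ t := by
  have hstep' : Measurable fun p : E × E × L => step (p.1, p.2.1, p.2.2) := by
    exact hstepMeas.comp (measurable_fst.prodMk
      ((measurable_fst.comp measurable_snd).prodMk (measurable_snd.comp measurable_snd)))
  have hprob : ∀ t, IsProbabilityMeasure (μ t) := by
    intro t
    induction t with
    | zero => rw [hinit]; infer_instance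
    | succ t ih =>
      rw [hrec t]
      exact Measure.isProbabilityMeasure_map hstep'.aemeasurable
  intro t
  induction t with
  | zero => rw [hinit]; exact hμ₀
  | succ t ih =>
    haveI := hprob t
    rw [hrec t, Measure.map_map hGmeas hstep']
    have hcomp : (G ∘ fun p : E × E × L => step (p.1, p.2.1, p.2.2)) =
        (fun p : E × E × L => step (p.1, p.2.1, p.2.2)) ∘
          (Prod.map G (Prod.map G id)) := by
      funext p
      simp [Function.comp, Prod.map, hequiv]
    rw [hcomp, ← Measure.map_map hstep' ((hGmeas.prodMap (hGmeas.prodMap measurable_id))),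
      ← Measure.map_prod_map _ _ hGmeas (hGmeas.prodMap measurable_id),
      ← Measure.map_prod_map _ _ hGmeas measurable_id, Measure.map_id, ih, hν]
end

section
/- Let E be a finite-dimensional real inner product space (with its Borel σ-algebra), B : E → E a symmetric linear map, and μ a probability measure on E with finite second moment, ∫ ‖w‖² dμ(w) < ∞. Suppose μ is invariant under every orthogonal transformation of E commuting with B: for every linear isometry equivalence G : E ≃ E with G ∘ B = B ∘ G, Measure.map G μ = μ. Let C : E → E be a linear map satisfying ⟪C u, v⟫ = ∫ ⟪u, w⟫ · ⟪v, w⟫ dμ(w) for all u, v ∈ E. Then C is symmetric, C ∘ B = B ∘ C, and there exists a function f : ℝ → ℝ such that C v = f(λ) • v for every λ ∈ ℝ and every v ∈ E with B v = λ • v. -/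
open MeasureTheory
open scoped RealInnerProductSpace
open Submodule

section Aux

variable {E : Type*} [NormedAddCommGroup E] [InnerProductSpace ℝ E] [FiniteDimensional ℝ E]

/-- Explicit formula for the hyperplane reflection orthogonal to `v`. -/
lemma refl_formula (v w : E) :
    (reflection ((ℝ ∙ v)ᗮ)) w = w - ((2 : ℝ) * (⟪v, w⟫ / ((‖v‖ : ℝ) ^ 2))) • v := by
  rw [reflection_orthogonal_apply, reflection_singleton_apply]
  norm_num [two_smul, two_mul, add_smul]

/-- The reflection is self-adjoint. -/
lemma refl_selfadjoint (v a b : E) :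
    ⟪(reflection ((ℝ ∙ v)ᗮ)) a, b⟫ = ⟪a, (reflection ((ℝ ∙ v)ᗮ)) b⟫ := by
  rw [refl_formula, refl_formula, inner_sub_left, inner_sub_right,
    real_inner_smul_left, real_inner_smul_right, real_inner_comm v a]
  ring

/-- The reflection negates `v`. -/
lemma refl_neg_self (v : E) (hv : ‖v‖ = 1) : (reflection ((ℝ ∙ v)ᗮ)) v = -v := by
  rw [refl_formula, hv, real_inner_self_eq_norm_sq, hv]
  norm_num
  rw [two_smul]
  abel

/-- Reflection in the hyperplane orthogonal to an eigenvector of a symmetric map `B`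
commutes with `B`. -/
lemma refl_comm (B : E →ₗ[ℝ] E) (hB : ∀ u v : E, ⟪B u, v⟫ = ⟪u, B v⟫)
    {v : E} {l : ℝ} (hv : B v = l • v) (w : E) :
    (reflection ((ℝ ∙ v)ᗮ)) (B w) = B ((reflection ((ℝ ∙ v)ᗮ)) w) := by
  rw [refl_formula, refl_formula, map_sub, LinearMap.map_smul, hv,
    real_inner_comm (B w) v, hB w v, hv, real_inner_smul_right, ← real_inner_comm w v,
    smul_smul]
  have : (2 : ℝ) * (l * ⟪v, w⟫ / ‖v‖ ^ 2) = 2 * (⟪v, w⟫ / ‖v‖ ^ 2) * l := by ring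
  rw [this]

end Aux

/-- Distribution-level covariance alignment: if the weight law `μ` is invariant under
every orthogonal transformation commuting with the symmetric map `B`, then its covariance
operator `C` is symmetric, commutes with `B`, and acts as a scalar `f λ` on each
eigenspace of `B`. -/
theorem stmt_14 {E : Type*} [NormedAddCommGroup E] [InnerProductSpace ℝ E]
    [FiniteDimensional ℝ E] [MeasurableSpace E] [BorelSpace E]
    (B : E →ₗ[ℝ] E) (hB : ∀ u v : E, ⟪B u, v⟫ = ⟪u, B v⟫)
    (μ : Measure E) [IsProbabilityMeasure μ]
    (hmom : Integrable (fun w : E => ‖w‖ ^ 2) μ)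
    (hinv : ∀ G : E ≃ₗᵢ[ℝ] E, (∀ w : E, G (B w) = B (G w)) → Measure.map G μ = μ)
    (C : E →ₗ[ℝ] E)
    (hC : ∀ u v : E, ⟪C u, v⟫ = ∫ w, ⟪u, w⟫ * ⟪v, w⟫ ∂μ) :
    (∀ u v : E, ⟪C u, v⟫ = ⟪u, C v⟫) ∧
    (∀ w : E, C (B w) = B (C w)) ∧
    ∃ f : ℝ → ℝ, ∀ (l : ℝ) (v : E), B v = l • v → C v = f l • v := by
  classical
  -- C is symmetric
  have hsym : ∀ u v : E, ⟪C u, v⟫ = ⟪u, C v⟫ := by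
    intro u v
    rw [hC u v, real_inner_comm (C v) u, hC v u]
    exact integral_congr_ae (Filter.Eventually.of_forall fun w => by ring)
  -- C commutes with any commuting isometry
  have hCG : ∀ G : E ≃ₗᵢ[ℝ] E, (∀ w : E, G (B w) = B (G w)) →
      ∀ u x : E, ⟪C (G u), G x⟫ = ⟪C u, x⟫ := by
    intro G hG u x
    have hmap := hinv G hG
    rw [hC, hC]
    calc ∫ w, ⟪G u, w⟫ * ⟪G x, w⟫ ∂μ
        = ∫ w, ⟪G u, w⟫ * ⟪G x, w⟫ ∂(Measure.map G μ) := by rw [hmap]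
      _ = ∫ w, ⟪G u, G w⟫ * ⟪G x, G w⟫ ∂μ := by
          rw [integral_map]
          · exact (G.continuous.measurable).aemeasurable
          · exact ((Continuous.inner continuous_const continuous_id).mul
              (Continuous.inner continuous_const continuous_id)).aestronglyMeasurable
      _ = ∫ w, ⟪u, w⟫ * ⟪x, w⟫ ∂μ := by
          refine integral_congr_ae (Filter.Eventually.of_forall fun w => ?_)
          simp only [LinearIsometryEquiv.inner_map_map]
  -- C commutes with hyperplane reflections in eigenvectors of B
  have hCrefl : ∀ {v : E} {l : ℝ}, B v = l • v →
      ∀ u : E, C ((reflection ((ℝ ∙ v)ᗮ)) u) = (reflection ((ℝ ∙ v)ᗮ)) (C u) := by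
    intro v l hv u
    have hkey := hCG (reflection ((ℝ ∙ v)ᗮ)) (refl_comm B hB hv)
    refine ext_inner_right ℝ fun x => ?_
    have h1 : x = (reflection ((ℝ ∙ v)ᗮ)) ((reflection ((ℝ ∙ v)ᗮ)) x) :=
      (reflection_reflection _ x).symm
    calc ⟪C ((reflection ((ℝ ∙ v)ᗮ)) u), x⟫
        = ⟪C ((reflection ((ℝ ∙ v)ᗮ)) u),
            (reflection ((ℝ ∙ v)ᗮ)) ((reflection ((ℝ ∙ v)ᗮ)) x)⟫ := by rw [← h1]
      _ = ⟪C u, (reflection ((ℝ ∙ v)ᗮ)) x⟫ := hkey u _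
      _ = ⟪(reflection ((ℝ ∙ v)ᗮ)) (C u), x⟫ := (refl_selfadjoint v (C u) x).symm
  -- C acts as a scalar on each unit eigenvector
  have hscal : ∀ {v : E} {l : ℝ}, ‖v‖ = 1 → B v = l • v → C v = ⟪v, C v⟫ • v := by
    intro v l hv1 hv
    have h := hCrefl hv v
    rw [refl_neg_self v hv1, map_neg, refl_formula, hv1] at h
    set s : ℝ := 2 * (⟪v, C v⟫ / (1 : ℝ) ^ 2) with hsdef
    have h3 : (2 : ℝ) • C v = s • v := by
      linear_combination (norm := module) -h
    calc C v = (2 : ℝ)⁻¹ • ((2 : ℝ) • C v) := by rw [smul_smul]; norm_num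
      _ = (2 : ℝ)⁻¹ • (s • v) := by rw [h3]
      _ = ⟪v, C v⟫ • v := by rw [smul_smul, hsdef]; congr 1; ring
  -- the scalar only depends on the eigenvalue
  have htrans : ∀ {u v : E} {l : ℝ}, ‖u‖ = 1 → B u = l • u → ‖v‖ = 1 → B v = l • v →
      ⟪u, C u⟫ = ⟪v, C v⟫ := by
    intro u v l hu1 hu hv1 hv
    by_cases huv : u = v
    · rw [huv]
    · have hw : B (u - v) = l • (u - v) := by rw [map_sub, hu, hv, smul_sub]
      have hwn : u - v ≠ 0 := sub_ne_zero.mpr huv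
      have hGu : (reflection ((ℝ ∙ (u - v))ᗮ)) u = v := by
        rw [refl_formula]
        have hns : ‖u - v‖ ^ 2 = 2 - 2 * ⟪u, v⟫ := by
          rw [← real_inner_self_eq_norm_sq, inner_sub_sub_self,
            real_inner_self_eq_norm_sq, real_inner_self_eq_norm_sq, hu1, hv1,
            real_inner_comm v u]
          ring
        have hiw : ⟪u - v, u⟫ = 1 - ⟪u, v⟫ := by
          rw [inner_sub_left, real_inner_self_eq_norm_sq, hu1, real_inner_comm v u]
          ring
        have hne : (2 : ℝ) - 2 * ⟪u, v⟫ ≠ 0 := by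
          rw [← hns]
          simpa using pow_ne_zero 2 (norm_ne_zero_iff.mpr hwn)
        have hcoef : (2 : ℝ) * (⟪u - v, u⟫ / ‖u - v‖ ^ 2) = 1 := by
          rw [hiw, hns]
          rw [mul_div_assoc']
          exact (div_eq_one_iff_eq hne).mpr (by ring)
        rw [hcoef, one_smul]
        abel
      obtain ⟨c, hc⟩ : ∃ c : ℝ, C u = c • u := ⟨⟪u, C u⟫, hscal hu1 hu⟩
      have hCv : C v = c • v := by
        rw [← hGu, hCrefl hw u, hc, _root_.map_smul]
      rw [hc, hCv, real_inner_smul_right, real_inner_smul_right,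
        real_inner_self_eq_norm_sq, real_inner_self_eq_norm_sq, hu1, hv1]
  refine ⟨hsym, ?_, ?_⟩
  · -- commutes with B via spectral theorem
    have hB' : B.IsSymmetric := hB
    have hn : Module.finrank ℝ E = Module.finrank ℝ E := rfl
    have hbi : ∀ i, (C ∘ₗ B) ((hB'.eigenvectorBasis hn).toBasis i)
        = (B ∘ₗ C) ((hB'.eigenvectorBasis hn).toBasis i) := by
      intro i
      simp only [OrthonormalBasis.coe_toBasis, LinearMap.comp_apply]
      have he := hB'.apply_eigenvectorBasis hn i
      have hu1 : ‖(hB'.eigenvectorBasis hn) i‖ = 1 :=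
        (hB'.eigenvectorBasis hn).orthonormal.1 i
      obtain ⟨c, hc⟩ : ∃ c : ℝ,
          C ((hB'.eigenvectorBasis hn) i) = c • (hB'.eigenvectorBasis hn) i :=
        ⟨_, hscal hu1 he⟩
      rw [he, LinearMap.map_smul, hc, LinearMap.map_smul, he, smul_smul, smul_smul, mul_comm]
    have hcomp : C ∘ₗ B = B ∘ₗ C := (hB'.eigenvectorBasis hn).toBasis.ext hbi
    intro w
    exact LinearMap.congr_fun hcomp w
  · -- the transfer function f
    refine ⟨fun l => if h : ∃ v : E, ‖v‖ = 1 ∧ B v = l • v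
      then ⟪h.choose, C h.choose⟫ else 0, ?_⟩
    intro l v hv
    by_cases hv0 : v = 0
    · rw [hv0, map_zero, smul_zero]
    · have hvn : ‖v‖ ≠ 0 := norm_ne_zero_iff.mpr hv0
      set u : E := (‖v‖ : ℝ)⁻¹ • v with hudef
      have hu1 : ‖u‖ = 1 := by
        rw [hudef, norm_smul, norm_inv, norm_norm, inv_mul_cancel₀ hvn]
      have hu : B u = l • u := by
        rw [hudef, LinearMap.map_smul, hv, smul_comm]
      have hex : ∃ x : E, ‖x‖ = 1 ∧ B x = l • x := ⟨u, hu1, hu⟩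
      simp only [dif_pos hex]
      obtain ⟨hx1, hx⟩ := hex.choose_spec
      obtain ⟨c, hc, hcv⟩ : ∃ c : ℝ, C u = c • u ∧ ⟪hex.choose, C hex.choose⟫ = c :=
        ⟨⟪u, C u⟫, hscal hu1 hu, htrans hx1 hx hu1 hu⟩
      rw [hcv]
      have hvu : v = ‖v‖ • u := by
        rw [hudef, smul_smul, mul_inv_cancel₀ hvn, one_smul]
      rw [hvu, LinearMap.map_smul, hc]
      exact smul_comm _ _ _
end

section
/- Let E be a finite-dimensional real inner product space (with its Borel σ-algebra), B : E → E a symmetric linear map, L a measurable label space, g : ℝ × L → ℝ a measurable function, and η ∈ ℝ. Define step : E × E × L → E by step(w, x, y) = w − η • (g(⟪w, x⟫, y)) • x. Let ν and μ₀ be probability measures on E and π a probability measure on L, and assume ν and μ₀ are each invariant under every orthogonal transformation of E commuting with B: for every linear isometry equivalence G : E ≃ E with G ∘ B = B ∘ G, Measure.map G ν = ν and Measure.map G μ₀ = μ₀. Define recursively μ_{t+1} = Measure.map (fun p => step(p.1, p.2.1, p.2.2)) (μ_t.prod (ν.prod π)). Then: (i) for every t ∈ ℕ and every linear isometry equivalence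 G : E ≃ E with G ∘ B = B ∘ G, Measure.map G μ_t = μ_t; and (ii) for every t with ∫ ‖w‖² dμ_t(w) < ∞, if C_t : E → E is a linear map satisfying ⟪C_t u, v⟫ = ∫ ⟪u, w⟫ · ⟪v, w⟫ dμ_t(w) for all u, v ∈ E, then C_t ∘ B = B ∘ C_t and there exists f_t : ℝ → ℝ such that C_t v = f_t(λ) • v for every λ ∈ ℝ and every v ∈ E with B v = λ • v. -/
open MeasureTheory
open scoped RealInnerProductSpace

/-- Random-label training induces covariance alignment: if the data law `ν` and the
initial weight law `μ₀` are invariant under every orthogonal transformation commuting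
with the symmetric map `B`, then so is the weight law `μ t` after `t` SGD steps with
input-independent labels, and consequently the covariance operator `C t` of `μ t`
commutes with `B` and acts as a scalar transfer function `f t λ` on each eigenspace
of `B`. -/
theorem stmt_18 {E L : Type*} [NormedAddCommGroup E] [InnerProductSpace ℝ E]
    [FiniteDimensional ℝ E] [MeasurableSpace E] [BorelSpace E] [MeasurableSpace L]
    (B : E →ₗ[ℝ] E) (hB : ∀ u v : E, ⟪B u, v⟫ = ⟪u, B v⟫)
    (g : ℝ × L → ℝ) (hg : Measurable g) (η : ℝ)
    (step : E × E × L → E)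
    (hstep : ∀ (w x : E) (y : L), step (w, x, y) = w - η • (g (⟪w, x⟫, y)) • x)
    (ν : Measure E) [IsProbabilityMeasure ν]
    (μ₀ : Measure E) [IsProbabilityMeasure μ₀]
    (π : Measure L) [IsProbabilityMeasure π]
    (hν : ∀ G : E ≃ₗᵢ[ℝ] E, (∀ w : E, G (B w) = B (G w)) → Measure.map G ν = ν)
    (hμ₀ : ∀ G : E ≃ₗᵢ[ℝ] E, (∀ w : E, G (B w) = B (G w)) → Measure.map G μ₀ = μ₀)
    (μ : ℕ → Measure E) (hinit : μ 0 = μ₀)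
    (hrec : ∀ t : ℕ, μ (t + 1) =
      Measure.map (fun p : E × E × L => step (p.1, p.2.1, p.2.2)) ((μ t).prod (ν.prod π))) :
    (∀ (t : ℕ) (G : E ≃ₗᵢ[ℝ] E), (∀ w : E, G (B w) = B (G w)) →
      Measure.map G (μ t) = μ t) ∧
    (∀ t : ℕ, Integrable (fun w : E => ‖w‖ ^ 2) (μ t) →
      ∀ C : E →ₗ[ℝ] E, (∀ u v : E, ⟪C u, v⟫ = ∫ w, ⟪u, w⟫ * ⟪v, w⟫ ∂(μ t)) →
        (∀ w : E, C (B w) = B (C w)) ∧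
        ∃ f : ℝ → ℝ, ∀ (l : ℝ) (v : E), B v = l • v → C v = f l • v) := by
  -- the single-step map, and its measurability
  have hsfun : (fun p : E × E × L => step (p.1, p.2.1, p.2.2)) =
      fun p : E × E × L => p.1 - η • (g (⟪p.1, p.2.1⟫, p.2.2)) • p.2.1 := by
    funext p; rw [hstep]
  have hinner : Measurable fun p : E × E × L => (⟪p.1, p.2.1⟫ : ℝ) :=
    continuous_inner.measurable.comp (measurable_fst.prodMk measurable_snd.fst)
  have hs : Measurable (fun p : E × E × L => step (p.1, p.2.1, p.2.2)) := by
    rw [hsfun]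
    exact measurable_fst.sub
      (((hg.comp (hinner.prodMk measurable_snd.snd)).smul measurable_snd.fst).const_smul η)
  -- each μ t is a probability measure
  have hprob : ∀ t : ℕ, IsProbabilityMeasure (μ t) := by
    intro t
    induction t with
    | zero => rw [hinit]; infer_instance
    | succ t ih =>
      haveI := ih
      rw [hrec t]
      exact Measure.isProbabilityMeasure_map hs.aemeasurable
  -- Part 1: invariance by induction
  have part1 : ∀ (t : ℕ) (G : E ≃ₗᵢ[ℝ] E), (∀ w : E, G (B w) = B (G w)) →
      Measure.map G (μ t) = μ t := by
    intro t
    induction t with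
    | zero => intro G hG; rw [hinit]; exact hμ₀ G hG
    | succ t ih =>
      intro G hG
      haveI := hprob t
      have hGmeas : Measurable (G : E → E) := G.continuous.measurable
      have hT : Measurable (Prod.map (G : E → E) (Prod.map (G : E → E) (id : L → L))) :=
        hGmeas.prodMap (hGmeas.prodMap measurable_id)
      have hcomp : (G : E → E) ∘ (fun p : E × E × L => step (p.1, p.2.1, p.2.2)) =
          (fun p : E × E × L => step (p.1, p.2.1, p.2.2)) ∘
            (Prod.map (G : E → E) (Prod.map (G : E → E) (id : L → L))) := by
        funext p
        simp only [Function.comp_apply, Prod.map_fst, Prod.map_snd, id_eq, hstep,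
          LinearIsometryEquiv.inner_map_map, map_sub, _root_.map_smul]
      rw [hrec t, Measure.map_map hGmeas hs, hcomp, ← Measure.map_map hs hT,
        ← Measure.map_prod_map _ _ hGmeas (hGmeas.prodMap measurable_id),
        ← Measure.map_prod_map _ _ hGmeas measurable_id,
        Measure.map_id, ih G hG, hν G hG]
  refine ⟨part1, ?_⟩
  intro t hint C hC
  -- C commutes with every orthogonal G commuting with B
  have hcomm : ∀ G : E ≃ₗᵢ[ℝ] E, (∀ w : E, G (B w) = B (G w)) →
      ∀ u : E, C (G u) = G (C u) := by
    intro G hG u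
    apply ext_inner_right ℝ
    intro v
    have hμG := part1 t G hG
    have hchg : ∀ a b : E, (∫ w, ⟪a, w⟫ * ⟪b, w⟫ ∂(μ t)) =
        ∫ w, ⟪a, G w⟫ * ⟪b, G w⟫ ∂(μ t) := by
      intro a b
      conv_lhs => rw [← hμG]
      rw [integral_map G.continuous.measurable.aemeasurable]
      exact ((continuous_const.inner continuous_id).mul
        (continuous_const.inner continuous_id)).aestronglyMeasurable
    have h1 : ⟪C (G u), v⟫ = ∫ w, ⟪u, w⟫ * ⟪G.symm v, w⟫ ∂(μ t) := by
      rw [hC, hchg]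
      congr 1; funext w
      rw [G.inner_map_map]
      congr 1
      conv_lhs => rw [← G.apply_symm_apply v, G.inner_map_map]
    have h2 : ⟪G (C u), v⟫ = ⟪C u, G.symm v⟫ := by
      conv_lhs => rw [← G.apply_symm_apply v, G.inner_map_map]
    rw [h1, h2, hC]
  -- eigenvectors of B are mapped to multiples of themselves
  have hscal : ∀ (l : ℝ) (v : E), v ≠ 0 → B v = l • v → ∃ c : ℝ, C v = c • v := by
    intro l v hv hBv
    have hGB : ∀ w : E, (Submodule.reflection (ℝ ∙ v)) (B w) = B ((Submodule.reflection (ℝ ∙ v)) w) := by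
      intro w
      have hip : ⟪v, B w⟫ = l * ⟪v, w⟫ := by rw [← hB, hBv, real_inner_smul_left]
      have hproj : ((ℝ ∙ v).starProjection (B w)) =
          B ((ℝ ∙ v).starProjection w) := by
        rw [Submodule.starProjection_singleton, Submodule.starProjection_singleton,
          _root_.map_smul, hBv, hip, smul_smul]
        congr 1
        field_simp
      rw [Submodule.reflection_apply, Submodule.reflection_apply, map_sub, hproj, map_nsmul]
    have hfix : (Submodule.reflection (ℝ ∙ v)) (C v) = C v := by
      have hvK : v ∈ (ℝ ∙ v) := Submodule.mem_span_singleton_self v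
      have h1 : (Submodule.reflection (ℝ ∙ v)) v = v := (Submodule.reflection_eq_self_iff v).mpr hvK
      calc (Submodule.reflection (ℝ ∙ v)) (C v) = C ((Submodule.reflection (ℝ ∙ v)) v) :=
            (hcomm (Submodule.reflection (ℝ ∙ v)) hGB v).symm
        _ = C v := by rw [h1]
    have hmem : C v ∈ (ℝ ∙ v) := (Submodule.reflection_eq_self_iff (C v)).mp hfix
    obtain ⟨c, hc⟩ := Submodule.mem_span_singleton.mp hmem
    exact ⟨c, hc.symm⟩
  constructor
  · -- C commutes with B via an eigenbasis of B
    have hBsym : B.IsSymmetric := hB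
    have hn : Module.finrank ℝ E = Module.finrank ℝ E := rfl
    have hcb : ∀ i : Fin (Module.finrank ℝ E), ∃ c : ℝ,
        C (hBsym.eigenvectorBasis hn i) = c • hBsym.eigenvectorBasis hn i := fun i =>
      hscal (hBsym.eigenvalues hn i) _ (hBsym.hasEigenvector_eigenvectorBasis hn i).2
        (hBsym.apply_eigenvectorBasis hn i)
    have hCB : C ∘ₗ B = B ∘ₗ C := by
      apply (hBsym.eigenvectorBasis hn).toBasis.ext
      intro i
      obtain ⟨c, hc⟩ := hcb i
      simp only [OrthonormalBasis.coe_toBasis, LinearMap.comp_apply]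
      rw [hBsym.apply_eigenvectorBasis hn i, _root_.map_smul, hc, _root_.map_smul,
        hBsym.apply_eigenvectorBasis hn i, smul_comm]
    intro w
    exact congrFun (congrArg (fun F : E →ₗ[ℝ] E => (F : E → E)) hCB) w
  · -- the transfer function
    have hexists : ∀ l : ℝ, ∃ c : ℝ, ∀ v : E, B v = l • v → C v = c • v := by
      intro l
      by_cases h : ∃ v : E, v ≠ 0 ∧ B v = l • v
      · obtain ⟨v₀, hv₀, hBv₀⟩ := h
        obtain ⟨c₀, hc₀⟩ := hscal l v₀ hv₀ hBv₀
        refine ⟨c₀, fun v hv => ?_⟩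
        by_cases hvz : v = 0
        · simp [hvz]
        obtain ⟨c, hc⟩ := hscal l v hvz hv
        suffices hcc : c = c₀ by rw [hc, hcc]
        by_cases hdep : ∃ a : ℝ, v = a • v₀
        · obtain ⟨a, rfl⟩ := hdep
          have ha : a ≠ 0 := by rintro rfl; simp at hvz
          have h1 : C (a • v₀) = (a * c₀) • v₀ := by rw [C.map_smul, hc₀, smul_smul]
          have h2 : C (a • v₀) = (c * a) • v₀ := by rw [hc, smul_smul]
          have h3 : (c * a - a * c₀) • v₀ = 0 := by rw [sub_smul, ← h1, ← h2, sub_self]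
          rcases smul_eq_zero.mp h3 with h4 | h4
          · have h5 : a * (c - c₀) = 0 := by linear_combination h4
            rcases mul_eq_zero.mp h5 with h6 | h6
            · exact absurd h6 ha
            · exact sub_eq_zero.mp h6
          · exact absurd h4 hv₀
        · have hsum : B (v + v₀) = l • (v + v₀) := by rw [map_add, hv, hBv₀, smul_add]
          have hne : v + v₀ ≠ 0 := by
            intro h0
            exact hdep ⟨-1, by
              rw [neg_smul, one_smul]; exact eq_neg_of_add_eq_zero_left h0⟩
          obtain ⟨c', hc'⟩ := hscal l _ hne hsum
          have h3 : c • v + c₀ • v₀ = c' • v + c' • v₀ := by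
            rw [← hc, ← hc₀, ← map_add, hc', smul_add]
          have heq : (c - c') • v = (c' - c₀) • v₀ := by
            rw [sub_smul, sub_smul, sub_eq_sub_iff_add_eq_add, h3, add_comm]
          by_cases hcase : c = c'
          · have h0 : (c' - c₀) • v₀ = 0 := by rw [← heq, hcase, sub_self, zero_smul]
            rcases smul_eq_zero.mp h0 with h4 | h4
            · rw [hcase, sub_eq_zero.mp h4]
            · exact absurd h4 hv₀
          · exfalso
            apply hdep
            refine ⟨(c - c')⁻¹ * (c' - c₀), ?_⟩
            rw [mul_smul, ← heq, smul_smul, inv_mul_cancel₀ (sub_ne_zero.mpr hcase), one_smul]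
      · refine ⟨0, fun v hv => ?_⟩
        by_cases hvz : v = 0
        · simp [hvz]
        · exact absurd ⟨v, hvz, hv⟩ h
    choose f hf using hexists
    exact ⟨f, fun l v hv => hf l v hv⟩
end
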